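/- Fix σ ∈ (0, 1/2). Suppose X ≻ 0, D symmetric with X + D ≻ 0, δ ≤ −(1/M²)‖D‖_F² for some M > 0, the Hessian of g(Y) = −log det Y + tr(SY) is L-Lipschitz along the segment [X, X+D], and ‖D‖_F < 3(1 − 2σ)/(L M²). Then the full step α = 1 satisfies the Armijo condition f(X + D) ≤ f(X) + σδ, where f = g + ‖·‖_{1,Λ} and δ = tr(∇g(X)^T D) + ‖X+D‖_{1,Λ} − ‖X‖_{1,Λ}. -/

import Mathlib

open Matrix BigOperators Kronecker

/-- Weighted elementwise ℓ1 norm `‖X‖_{1,Λ} = Σᵢⱼ Λᵢⱼ|Xᵢⱼ|`. -/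
noncomputable def norm1 {p : ℕ} (Λ X : Matrix (Fin p) (Fin p) ℝ) : ℝ :=
  ∑ i, ∑ j, Λ i j * |X i j|

/-- Vectorization of a matrix, as a function on index pairs. -/
def mvec {p : ℕ} (D : Matrix (Fin p) (Fin p) ℝ) : Fin p × Fin p → ℝ :=
  fun ij => D ij.1 ij.2

/-- Frobenius norm of a square matrix. -/
noncomputable def frob {ι : Type*} [Fintype ι] (M : Matrix ι ι ℝ) : ℝ :=
  Real.sqrt (∑ i, ∑ j, (M i j) ^ 2)

/-! ### Auxiliary lemmas -/

lemma frob_nonneg {ι : Type*} [Fintype ι] (M : Matrix ι ι ℝ) : 0 ≤ frob M := Real.sqrt_nonneg _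

lemma frob_sq {ι : Type*} [Fintype ι] (M : Matrix ι ι ℝ) : frob M ^ 2 = ∑ i, ∑ j, (M i j) ^ 2 :=
  Real.sq_sqrt (by positivity)

/-- Cauchy–Schwarz style bound: `v ⬝ (M v) ≤ ‖M‖_F ‖v‖²`. -/
lemma dot_mulVec_le {ι : Type*} [Fintype ι] (M : Matrix ι ι ℝ) (v : ι → ℝ) :
    v ⬝ᵥ (M *ᵥ v) ≤ frob M * ∑ i, v i ^ 2 := by
  have h1 : (v ⬝ᵥ (M *ᵥ v)) ^ 2 ≤ (∑ i, v i ^ 2) * ∑ i, (M *ᵥ v) i ^ 2 := by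
    simpa [dotProduct] using Finset.sum_mul_sq_le_sq_mul_sq Finset.univ v (M *ᵥ v)
  have h2 : ∑ i, (M *ᵥ v) i ^ 2 ≤ (∑ i, ∑ j, (M i j) ^ 2) * ∑ j, v j ^ 2 := by
    rw [Finset.sum_mul]
    refine Finset.sum_le_sum fun i _ => ?_
    simpa [mulVec, dotProduct] using Finset.sum_mul_sq_le_sq_mul_sq Finset.univ (M i) v
  have hv : 0 ≤ ∑ i, v i ^ 2 := by positivity
  have hM : 0 ≤ ∑ i, ∑ j, (M i j) ^ 2 := by positivity
  have h3 : (v ⬝ᵥ (M *ᵥ v)) ^ 2 ≤ (frob M * ∑ i, v i ^ 2) ^ 2 := by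
    have := mul_le_mul_of_nonneg_left h2 hv
    rw [mul_pow, frob_sq M]; nlinarith
  calc v ⬝ᵥ (M *ᵥ v) ≤ |v ⬝ᵥ (M *ᵥ v)| := le_abs_self _
    _ = Real.sqrt ((v ⬝ᵥ (M *ᵥ v)) ^ 2) := (Real.sqrt_sq_eq_abs _).symm
    _ ≤ Real.sqrt ((frob M * ∑ i, v i ^ 2) ^ 2) := Real.sqrt_le_sqrt h3
    _ = frob M * ∑ i, v i ^ 2 := Real.sqrt_sq (mul_nonneg (frob_nonneg M) (by positivity))

/-- The Kronecker quadratic form as a trace. -/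
lemma quad_eq_trace {p : ℕ} (D A : Matrix (Fin p) (Fin p) ℝ) :
    mvec D ⬝ᵥ ((A ⊗ₖ A) *ᵥ mvec D) = Matrix.trace (Dᵀ * A * D * Aᵀ) := by
  simp only [dotProduct, mulVec, Matrix.trace, Matrix.diag, Matrix.mul_apply, mvec,
    kroneckerMap_apply, Fintype.sum_prod_type, transpose_apply, Finset.sum_mul,
    Finset.mul_sum]
  rw [Finset.sum_comm]
  refine Finset.sum_congr rfl fun i _ => ?_
  rw [Finset.sum_comm]
  conv_rhs => rw [Finset.sum_comm]
  refine Finset.sum_congr rfl fun j _ => ?_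
  conv_rhs => rw [Finset.sum_comm]
  refine Finset.sum_congr rfl fun k _ => ?_
  refine Finset.sum_congr rfl fun l _ => ?_
  ring

/-- Scalar second-order Taylor bound with Lipschitz-type control on the second derivative. -/
lemma scalar_taylor {p : ℕ} (μ : Fin p → ℝ) (B : ℝ)
    (hν : ∀ t ∈ Set.Icc (0:ℝ) 1, ∀ i, 0 < 1 + t * μ i)
    (hq : ∀ t ∈ Set.Icc (0:ℝ) 1,
      (∑ i, μ i ^ 2 / (1 + t * μ i) ^ 2) - (∑ i, μ i ^ 2) ≤ t * B) :
    -(∑ i, Real.log (1 + μ i)) ≤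
      -(∑ i, μ i) + (∑ i, μ i ^ 2) / 2 + B / 6 := by
  set φ : ℝ → ℝ := fun t => -(∑ i, Real.log (1 + t * μ i)) with hφ
  set ψ : ℝ → ℝ := fun t => ∑ i, μ i / (1 + t * μ i) with hψ
  set q : ℝ → ℝ := fun t => ∑ i, μ i ^ 2 / (1 + t * μ i) ^ 2 with hqdef
  have hφ' : ∀ t ∈ Set.Icc (0:ℝ) 1, HasDerivAt φ (-(ψ t)) t := by
    intro t ht
    have : HasDerivAt (fun t => ∑ i, Real.log (1 + t * μ i)) (∑ i, μ i / (1 + t * μ i)) t := by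
      apply HasDerivAt.fun_sum
      intro i _
      have h1 : HasDerivAt (fun t : ℝ => 1 + t * μ i) (μ i) t := by
        simpa using (hasDerivAt_mul_const (μ i)).const_add 1
      simpa using h1.log (hν t ht i).ne'
    exact this.neg
  have hψ' : ∀ t ∈ Set.Icc (0:ℝ) 1, HasDerivAt ψ (-(q t)) t := by
    intro t ht
    have : HasDerivAt (fun t => ∑ i, μ i / (1 + t * μ i))
        (∑ i, -(μ i ^ 2 / (1 + t * μ i) ^ 2)) t := by
      apply HasDerivAt.fun_sum
      intro i _
      have h1 : HasDerivAt (fun t : ℝ => 1 + t * μ i) (μ i) t := by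
        simpa using (hasDerivAt_mul_const (μ i)).const_add 1
      have := (hasDerivAt_const t (μ i)).div h1 (hν t ht i).ne'
      refine this.congr_deriv ?_
      field_simp
      ring
    simpa [hqdef, Finset.sum_neg_distrib] using this
  set u : ℝ → ℝ := fun t => -(ψ t) + ψ 0 - t * q 0 - t ^ 2 * (B / 2) with hu
  have hu' : ∀ t ∈ Set.Icc (0:ℝ) 1, HasDerivAt u (q t - q 0 - t * B) t := by
    intro t ht
    have h1 := ((hψ' t ht).neg.add_const (ψ 0)).sub
      (((hasDerivAt_id t).const_mul (q 0)).add (((hasDerivAt_pow 2 t)).const_mul (B/2)))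
    convert h1 using 1
    · rfl
    · rfl
    · funext x; simp only [hu, id, Pi.sub_apply, Pi.add_apply, Pi.neg_apply]; ring
    · norm_num
      ring
  have huanti : AntitoneOn u (Set.Icc (0:ℝ) 1) := by
    apply antitoneOn_of_deriv_nonpos (convex_Icc 0 1)
    · intro x hx
      exact (hu' x hx).continuousAt.continuousWithinAt
    · intro x hx
      rw [interior_Icc] at hx
      exact (hu' x (Set.mem_Icc_of_Ioo hx)).differentiableAt.differentiableWithinAt
    · intro x hx
      rw [interior_Icc] at hx
      have hx' := Set.mem_Icc_of_Ioo hx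
      rw [(hu' x hx').deriv]
      have h2 := hq x hx'
      have hq0 : q 0 = ∑ i, μ i ^ 2 := by simp [hqdef]
      simp only [hqdef] at h2 ⊢
      rw [hqdef] at hq0
      simp only [hq0]
      linarith
  have hu0 : u 0 = 0 := by simp [hu]
  have huval : ∀ t ∈ Set.Icc (0:ℝ) 1, u t ≤ 0 := by
    intro t ht
    have := huanti (Set.left_mem_Icc.2 zero_le_one) ht ht.1
    rwa [hu0] at this
  set w : ℝ → ℝ := fun t => φ t - (t * (-(ψ 0)) + t ^ 2 * (q 0 / 2) + t ^ 3 * (B / 6)) with hw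
  have hw' : ∀ t ∈ Set.Icc (0:ℝ) 1, HasDerivAt w (u t) t := by
    intro t ht
    have h1 := (hφ' t ht).sub
      ((((hasDerivAt_id t).const_mul (-(ψ 0))).add
        (((hasDerivAt_pow 2 t)).const_mul (q 0 / 2))).add
        (((hasDerivAt_pow 3 t)).const_mul (B / 6)))
    convert h1 using 1
    · rfl
    · rfl
    · funext x; simp only [hw, id, Pi.sub_apply, Pi.add_apply, Pi.neg_apply]; ring
    · simp only [hu, id]
      norm_num
      ring
  have hwanti : AntitoneOn w (Set.Icc (0:ℝ) 1) := by
    apply antitoneOn_of_deriv_nonpos (convex_Icc 0 1)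
    · intro x hx
      exact (hw' x hx).continuousAt.continuousWithinAt
    · intro x hx
      rw [interior_Icc] at hx
      exact (hw' x (Set.mem_Icc_of_Ioo hx)).differentiableAt.differentiableWithinAt
    · intro x hx
      rw [interior_Icc] at hx
      have hx' := Set.mem_Icc_of_Ioo hx
      rw [(hw' x hx').deriv]
      exact huval x hx'
  have hw0 : w 0 = 0 := by simp [hw, hφ]
  have hw1 : w 1 ≤ 0 := by
    have := hwanti (Set.left_mem_Icc.2 zero_le_one) (Set.right_mem_Icc.2 zero_le_one) zero_le_one
    rwa [hw0] at this
  have hψ0 : ψ 0 = ∑ i, μ i := by simp [hψ]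
  have hq0 : q 0 = ∑ i, μ i ^ 2 := by simp [hqdef]
  have hφ1 : φ 1 = -(∑ i, Real.log (1 + μ i)) := by simp [hφ]
  simp only [hw, hφ1, hψ0, hq0] at hw1
  linarith [hw1]

lemma isHermitian_of_isSymm {p : ℕ} {A : Matrix (Fin p) (Fin p) ℝ} (h : A.IsSymm) :
    A.IsHermitian := by
  rw [Matrix.IsHermitian, Matrix.conjTranspose_eq_transpose_of_trivial]; exact h

lemma transpose_eq_of_isHermitian {p : ℕ} {A : Matrix (Fin p) (Fin p) ℝ} (h : A.IsHermitian) :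
    Aᵀ = A := by
  rw [← Matrix.conjTranspose_eq_transpose_of_trivial]; exact h

/-- convexity of the PosDef cone along the segment. -/
lemma posDef_segment {p : ℕ} {X D : Matrix (Fin p) (Fin p) ℝ} (hX : X.PosDef) (hD : D.IsSymm)
    (hXD : (X + D).PosDef) {t : ℝ} (ht : t ∈ Set.Icc (0:ℝ) 1) : (X + t • D).PosDef := by
  have hDh : (t • D).IsHermitian := by
    rw [Matrix.IsHermitian, Matrix.conjTranspose_smul]
    rw [isHermitian_of_isSymm hD]
    simp
  refine posDef_iff_dotProduct_mulVec.2 ⟨hX.1.add hDh, fun x hx => ?_⟩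
  have ha := hX.dotProduct_mulVec_pos hx
  have hb := hXD.dotProduct_mulVec_pos hx
  have key : dotProduct (star x) ((X + t • D) *ᵥ x)
      = (1 - t) * dotProduct (star x) (X *ᵥ x) + t * dotProduct (star x) ((X + D) *ᵥ x) := by
    simp only [Matrix.add_mulVec, Matrix.smul_mulVec, dotProduct_add, dotProduct_smul,
      smul_eq_mul]
    ring
  rw [key]
  rcases eq_or_lt_of_le ht.1 with h | h
  · rw [← h]; simpa using ha
  · have h1 : 0 < t * dotProduct (star x) ((X + D) *ᵥ x) := mul_pos h hb
    have h2 : 0 ≤ (1 - t) * dotProduct (star x) (X *ᵥ x) :=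
      mul_nonneg (by linarith [ht.2]) ha.le
    linarith

/-- Congruence preserves positive definiteness. -/
lemma posDef_conj {p : ℕ} {A B : Matrix (Fin p) (Fin p) ℝ} (hA : A.PosDef)
    (hB : IsUnit B.det) : (Bᴴ * A * B).PosDef := by
  refine posDef_iff_dotProduct_mulVec.2 ⟨?_, fun x hx => ?_⟩
  · have : (Bᴴ * A * B)ᴴ = Bᴴ * A * B := by
      rw [Matrix.conjTranspose_mul, Matrix.conjTranspose_mul, Matrix.conjTranspose_conjTranspose,
        hA.1.eq, Matrix.mul_assoc]
    exact this
  · have hBx : B *ᵥ x ≠ 0 := by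
      have hinj : Function.Injective (B.mulVec) :=
        Matrix.mulVec_injective_iff_isUnit.mpr (Matrix.isUnit_iff_isUnit_det _ |>.2 hB)
      intro hcon
      exact hx (hinj (by simpa using hcon))
    have key : dotProduct (star x) ((Bᴴ * A * B) *ᵥ x)
        = dotProduct (star (B *ᵥ x)) (A *ᵥ (B *ᵥ x)) := by
      rw [← Matrix.mulVec_mulVec, ← Matrix.mulVec_mulVec, Matrix.dotProduct_mulVec (star x),
        Matrix.star_mulVec]
    rw [key]
    exact hA.dotProduct_mulVec_pos hBx

lemma sandwich_mul {p : ℕ} {W : Matrix (Fin p) (Fin p) ℝ} (hW : star W * W = 1)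
    (a b : Fin p → ℝ) :
    (W * Matrix.diagonal a * star W) * (W * Matrix.diagonal b * star W)
      = W * Matrix.diagonal (fun i => a i * b i) * star W := by
  have h1 : (W * Matrix.diagonal a * star W) * (W * Matrix.diagonal b * star W)
      = W * Matrix.diagonal a * (star W * W) * Matrix.diagonal b * star W := by
    noncomm_ring
  rw [h1, hW, mul_one, Matrix.mul_assoc (W * Matrix.diagonal a), ← Matrix.mul_assoc,
    Matrix.mul_assoc W, Matrix.diagonal_mul_diagonal]

lemma sandwich_trace {p : ℕ} {W : Matrix (Fin p) (Fin p) ℝ} (hW : star W * W = 1)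
    (a : Fin p → ℝ) :
    Matrix.trace (W * Matrix.diagonal a * star W) = ∑ i, a i := by
  rw [Matrix.trace_mul_cycle, hW, Matrix.one_mul, Matrix.trace_diagonal]

theorem full_step_satisfies_armijo {p : ℕ} (S Λ X D : Matrix (Fin p) (Fin p) ℝ)
    (hX : X.PosDef) (hD : D.IsSymm) (hXD : (X + D).PosDef)
    (hSs : S.IsSymm) (hΛ : ∀ i j, 0 ≤ Λ i j)
    (σ : ℝ) (hσ : σ ∈ Set.Ioo (0 : ℝ) (1 / 2))
    (M : ℝ) (hM : 0 < M) (L : ℝ) (hL : 0 ≤ L)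
    (hLip : ∀ t ∈ Set.Icc (0 : ℝ) 1,
      frob ((X + t • D)⁻¹ ⊗ₖ (X + t • D)⁻¹ - X⁻¹ ⊗ₖ X⁻¹) ≤ t * L * frob D)
    (δ : ℝ)
    (hδdef : δ = Matrix.trace ((S - X⁻¹)ᵀ * D) + norm1 Λ (X + D) - norm1 Λ X)
    (hδ1 : δ ≤ -(mvec D ⬝ᵥ ((X⁻¹ ⊗ₖ X⁻¹) *ᵥ mvec D)))
    (hδ2 : δ ≤ -(1 / M ^ 2) * frob D ^ 2)
    (hsmall : frob D * (L * M ^ 2) < 3 * (1 - 2 * σ)) :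
    -Real.log (X + D).det + Matrix.trace (S * (X + D)) + norm1 Λ (X + D) ≤
      (-Real.log X.det + Matrix.trace (S * X) + norm1 Λ X) + σ * δ := by
  classical
  -- ### setup: square root of X and diagonalization of C = R⁻¹ D R⁻¹
  obtain ⟨R, hRR, hRh⟩ : ∃ R : Matrix (Fin p) (Fin p) ℝ, R * R = X ∧ R.IsHermitian := by
    open scoped MatrixOrder in
    exact ⟨CFC.sqrt X, CFC.sqrt_mul_sqrt_self X hX.posSemidef.nonneg,
      (CFC.sqrt_nonneg X).posSemidef.isHermitian⟩
  have hdetX : 0 < X.det := hX.det_pos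
  have hRdet : IsUnit R.det := by
    have : R.det * R.det = X.det := by rw [← Matrix.det_mul, hRR]
    refine isUnit_iff_ne_zero.2 fun h => ?_
    rw [h, mul_zero] at this
    exact hdetX.ne' this.symm
  have hRRinv : R * R⁻¹ = 1 := Matrix.mul_nonsing_inv R hRdet
  have hRinvR : R⁻¹ * R = 1 := Matrix.nonsing_inv_mul R hRdet
  have hRinvh : R⁻¹.IsHermitian := hRh.inv
  set C : Matrix (Fin p) (Fin p) ℝ := R⁻¹ * D * R⁻¹ with hCdef
  have hDh : D.IsHermitian := isHermitian_of_isSymm hD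
  have hCh : C.IsHermitian := by
    have : (R⁻¹ * D * R⁻¹)ᴴ = R⁻¹ * D * R⁻¹ := by
      rw [Matrix.conjTranspose_mul, Matrix.conjTranspose_mul, hRinvh.eq, hDh.eq,
        Matrix.mul_assoc]
    exact this
  set W : Matrix (Fin p) (Fin p) ℝ := (hCh.eigenvectorUnitary : Matrix (Fin p) (Fin p) ℝ)
    with hWdef
  set μ : Fin p → ℝ := hCh.eigenvalues with hμdef
  have hW1 : W * star W = 1 := Matrix.mem_unitaryGroup_iff.mp (hCh.eigenvectorUnitary).2
  have hW2 : star W * W = 1 := Matrix.mem_unitaryGroup_iff'.mp (hCh.eigenvectorUnitary).2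
  have hWdet : IsUnit W.det := by
    have : W.det * (star W).det = 1 := by rw [← Matrix.det_mul, hW1, Matrix.det_one]
    exact IsUnit.of_mul_eq_one _ this
  have hspec : C = W * Matrix.diagonal μ * star W := by
    have := hCh.spectral_theorem
    simpa using this
  have hDRCR : D = R * C * R := by
    have : R * (R⁻¹ * D * R⁻¹) * R = D := by
      calc R * (R⁻¹ * D * R⁻¹) * R = (R * R⁻¹) * D * (R⁻¹ * R) := by noncomm_ring
        _ = D := by rw [hRRinv, hRinvR, Matrix.one_mul, Matrix.mul_one]
    rw [hCdef, this]
  -- ### per-t identities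
  have block : ∀ t ∈ Set.Icc (0:ℝ) 1,
      ((X + t • D).det = X.det * ∏ i, (1 + t * μ i)) ∧ (∀ i, 0 < 1 + t * μ i) ∧
      (mvec D ⬝ᵥ (((X + t • D)⁻¹ ⊗ₖ (X + t • D)⁻¹) *ᵥ mvec D)
        = ∑ i, μ i ^ 2 / (1 + t * μ i) ^ 2) := by
    intro t ht
    have hYt : (X + t • D).PosDef := posDef_segment hX hD hXD ht
    set ν : Fin p → ℝ := fun i => 1 + t * μ i with hνdef
    set P : Matrix (Fin p) (Fin p) ℝ := W * Matrix.diagonal ν * star W with hPdef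
    have hPt : X + t • D = R * P * R := by
      have hdiag : Matrix.diagonal ν = 1 + t • Matrix.diagonal μ := by
        rw [← Matrix.diagonal_one, ← Matrix.diagonal_smul, ← Matrix.diagonal_add]
        congr 1
      have : P = 1 + t • C := by
        rw [hPdef, hdiag, Matrix.mul_add, Matrix.add_mul, Matrix.mul_one, Matrix.mul_smul,
          Matrix.smul_mul, hW1, ← hspec]
      rw [this, Matrix.mul_add, Matrix.add_mul, Matrix.mul_one, hRR, Matrix.mul_smul,
        Matrix.smul_mul, ← hDRCR]
      
    have hPpos : P.PosDef := by
      have h1 : P = R⁻¹ * (X + t • D) * R⁻¹ := by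
        rw [hPt]
        calc P = (R⁻¹ * R) * P * (R * R⁻¹) := by
              rw [hRinvR, hRRinv, Matrix.one_mul, Matrix.mul_one]
          _ = R⁻¹ * (R * P * R) * R⁻¹ := by noncomm_ring
      have h2 : IsUnit R⁻¹.det := by
        refine IsUnit.of_mul_eq_one R.det ?_
        rw [← Matrix.det_mul, hRinvR, Matrix.det_one]
      have := posDef_conj hYt (B := R⁻¹) h2
      rwa [hRinvh.eq, ← h1] at this
    have hνpos : ∀ i, 0 < ν i := by
      have h1 : Matrix.diagonal ν = Wᴴ * P * W := by
        rw [hPdef, ← Matrix.star_eq_conjTranspose]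
        calc Matrix.diagonal ν
            = (star W * W) * Matrix.diagonal ν * (star W * W) := by
              rw [hW2, Matrix.one_mul, Matrix.mul_one]
          _ = star W * (W * Matrix.diagonal ν * star W) * W := by noncomm_ring
      have := posDef_conj hPpos (B := W) hWdet
      rw [← h1] at this
      exact fun i => (Matrix.posDef_diagonal_iff.mp this) i
    have hνinv : ∀ i, ν i ≠ 0 := fun i => (hνpos i).ne'
    -- determinant identity
    have hdet : (X + t • D).det = X.det * ∏ i, ν i := by
      rw [hPt, Matrix.det_mul, Matrix.det_mul, hPdef, Matrix.det_mul, Matrix.det_mul,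
        Matrix.det_diagonal]
      have h1 : R.det * R.det = X.det := by rw [← Matrix.det_mul, hRR]
      have h2 : W.det * (star W).det = 1 := by rw [← Matrix.det_mul, hW1, Matrix.det_one]
      linear_combination ((∏ i, ν i) * (W.det * (star W).det)) * h1
        + (X.det * ∏ i, ν i) * h2
    -- inverse of P
    have hPinv : P⁻¹ = W * Matrix.diagonal (fun i => (ν i)⁻¹) * star W := by
      apply Matrix.inv_eq_right_inv
      rw [hPdef, sandwich_mul hW2]
      have : (fun i => ν i * (ν i)⁻¹) = fun _ => (1:ℝ) := by
        funext i; exact mul_inv_cancel₀ (hνinv i)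
      rw [this, Matrix.diagonal_one, Matrix.mul_one, hW1]
    -- quadratic form identity
    have hYinv : (X + t • D)⁻¹ = R⁻¹ * P⁻¹ * R⁻¹ := by
      rw [hPt, Matrix.mul_inv_rev, Matrix.mul_inv_rev, Matrix.mul_assoc]
    have hYinvh : ((X + t • D)⁻¹).IsHermitian := hYt.1.inv
    have hquad : mvec D ⬝ᵥ (((X + t • D)⁻¹ ⊗ₖ (X + t • D)⁻¹) *ᵥ mvec D)
        = ∑ i, μ i ^ 2 / ν i ^ 2 := by
      rw [quad_eq_trace, hD, transpose_eq_of_isHermitian hYinvh]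
      have e1 : D * (X + t • D)⁻¹ = R * (C * P⁻¹) * R⁻¹ := by
        rw [hYinv, hDRCR]
        calc (R * C * R) * (R⁻¹ * P⁻¹ * R⁻¹)
            = R * C * (R * R⁻¹) * P⁻¹ * R⁻¹ := by noncomm_ring
          _ = R * (C * P⁻¹) * R⁻¹ := by rw [hRRinv, Matrix.mul_one]; noncomm_ring
      have e2 : D * (X + t • D)⁻¹ * (D * (X + t • D)⁻¹)
          = R * (C * P⁻¹ * (C * P⁻¹)) * R⁻¹ := by
        rw [e1]
        calc (R * (C * P⁻¹) * R⁻¹) * (R * (C * P⁻¹) * R⁻¹)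
            = R * (C * P⁻¹) * (R⁻¹ * R) * (C * P⁻¹) * R⁻¹ := by noncomm_ring
          _ = R * (C * P⁻¹ * (C * P⁻¹)) * R⁻¹ := by
              rw [hRinvR, Matrix.mul_one]; noncomm_ring
      have e3 : C * P⁻¹ = W * Matrix.diagonal (fun i => μ i * (ν i)⁻¹) * star W := by
        rw [hspec, hPinv, sandwich_mul hW2]
      have e4 : Matrix.trace (D * (X + t • D)⁻¹ * D * (X + t • D)⁻¹)
          = ∑ i, (μ i * (ν i)⁻¹) * (μ i * (ν i)⁻¹) := by
        rw [Matrix.mul_assoc (D * (X + t • D)⁻¹) D, e2, e3, sandwich_mul hW2,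
          Matrix.trace_mul_cycle, ← Matrix.mul_assoc, hRinvR, Matrix.one_mul,
          sandwich_trace hW2]
      rw [e4]
      refine Finset.sum_congr rfl fun i _ => ?_
      field_simp
    exact ⟨hdet, fun i => hνpos i, hquad⟩
  -- trace of X⁻¹ D
  have htrinv : Matrix.trace (X⁻¹ * D) = ∑ i, μ i := by
    have hXinv : X⁻¹ = R⁻¹ * R⁻¹ := by rw [← hRR, Matrix.mul_inv_rev]
    have e1 : X⁻¹ * D = R⁻¹ * C * R := by
      rw [hXinv, hDRCR]
      calc (R⁻¹ * R⁻¹) * (R * C * R) = R⁻¹ * (R⁻¹ * R) * C * R := by noncomm_ring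
        _ = R⁻¹ * C * R := by rw [hRinvR, Matrix.mul_one]
    rw [e1, Matrix.trace_mul_cycle, hRRinv, Matrix.one_mul, hspec, sandwich_trace hW2]
  -- the value of the quadratic form at t = 0
  have h0mem : (0:ℝ) ∈ Set.Icc (0:ℝ) 1 := Set.left_mem_Icc.2 zero_le_one
  have h1mem : (1:ℝ) ∈ Set.Icc (0:ℝ) 1 := Set.right_mem_Icc.2 zero_le_one
  have hX0 : X + (0:ℝ) • D = X := by simp
  have hq0 : mvec D ⬝ᵥ ((X⁻¹ ⊗ₖ X⁻¹) *ᵥ mvec D) = ∑ i, μ i ^ 2 := by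
    have := (block 0 h0mem).2.2
    rw [hX0] at this
    simpa using this
  -- Frobenius norm of mvec D
  have hmv : ∑ ij : Fin p × Fin p, mvec D ij ^ 2 = frob D ^ 2 := by
    rw [frob_sq, Fintype.sum_prod_type]
    rfl
  have hf : 0 ≤ frob D := frob_nonneg D
  -- Lipschitz bound on the quadratic form
  have hB : ∀ t ∈ Set.Icc (0:ℝ) 1,
      (∑ i, μ i ^ 2 / (1 + t * μ i) ^ 2) - (∑ i, μ i ^ 2) ≤ t * (L * frob D ^ 3) := by
    intro t ht
    have hqt := (block t ht).2.2
    rw [← hqt, ← hq0]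
    have hsub : mvec D ⬝ᵥ (((X + t • D)⁻¹ ⊗ₖ (X + t • D)⁻¹) *ᵥ mvec D)
        - mvec D ⬝ᵥ ((X⁻¹ ⊗ₖ X⁻¹) *ᵥ mvec D)
        = mvec D ⬝ᵥ ((((X + t • D)⁻¹ ⊗ₖ (X + t • D)⁻¹) - (X⁻¹ ⊗ₖ X⁻¹)) *ᵥ mvec D) := by
      rw [Matrix.sub_mulVec, dotProduct_sub]
    rw [hsub]
    calc mvec D ⬝ᵥ ((((X + t • D)⁻¹ ⊗ₖ (X + t • D)⁻¹) - (X⁻¹ ⊗ₖ X⁻¹)) *ᵥ mvec D)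
        ≤ frob (((X + t • D)⁻¹ ⊗ₖ (X + t • D)⁻¹) - (X⁻¹ ⊗ₖ X⁻¹)) * ∑ ij, mvec D ij ^ 2 :=
          dot_mulVec_le _ _
      _ ≤ (t * L * frob D) * frob D ^ 2 := by
          rw [hmv]
          have h1 := hLip t ht
          have h2 : (0:ℝ) ≤ frob D ^ 2 := by positivity
          exact mul_le_mul_of_nonneg_right h1 h2
      _ = t * (L * frob D ^ 3) := by ring
  -- positivity of 1 + t μ i
  have hν : ∀ t ∈ Set.Icc (0:ℝ) 1, ∀ i, 0 < 1 + t * μ i := fun t ht => (block t ht).2.1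
  have taylor := scalar_taylor μ (L * frob D ^ 3) hν hB
  -- determinant at t = 1
  have hdet1 : (X + D).det = X.det * ∏ i, (1 + μ i) := by
    have := (block 1 h1mem).1
    simpa using this
  have hν1 : ∀ i, 0 < 1 + μ i := by
    have := (block 1 h1mem).2.1
    simpa using this
  have hlog1 : Real.log (X + D).det = Real.log X.det + ∑ i, Real.log (1 + μ i) := by
    rw [hdet1, Real.log_mul hdetX.ne' (Finset.prod_pos fun i _ => hν1 i).ne', Real.log_prod]
    intro i _
    exact (hν1 i).ne'
  -- trace identities
  have htrS : Matrix.trace (S * (X + D)) = Matrix.trace (S * X) + Matrix.trace (S * D) := by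
    rw [Matrix.mul_add, Matrix.trace_add]
  have htrδ : Matrix.trace ((S - X⁻¹)ᵀ * D)
      = Matrix.trace (S * D) - ∑ i, μ i := by
    rw [Matrix.transpose_sub, hSs, transpose_eq_of_isHermitian hX.1.inv,
      Matrix.sub_mul, Matrix.trace_sub, htrinv]
  -- scalar facts
  have hδ0 : δ ≤ 0 := by
    have h1 : (0:ℝ) ≤ (1 / M ^ 2) * frob D ^ 2 := by positivity
    linarith [hδ2]
  have hq0δ : (∑ i, μ i ^ 2) ≤ -δ := by
    rw [← hq0]; linarith [hδ1]
  have hf2 : frob D ^ 2 ≤ -δ * M ^ 2 := by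
    have hM2 : (0:ℝ) < M ^ 2 := by positivity
    have e : (1 / M ^ 2) * frob D ^ 2 * M ^ 2 = frob D ^ 2 := by field_simp
    nlinarith [mul_le_mul_of_nonneg_right hδ2 hM2.le, e]
  -- final arithmetic
  obtain ⟨hσ0, hσ2⟩ := hσ
  have key : (∑ i, μ i ^ 2) / 2 + (L * frob D ^ 3) / 6 ≤ (σ - 1) * δ := by
    have h1 : 0 ≤ (L * frob D) * (-δ * M ^ 2 - frob D ^ 2) :=
      mul_nonneg (mul_nonneg hL hf) (by linarith)
    have h2 : 0 ≤ (-δ) * (3 * (1 - 2 * σ) - frob D * (L * M ^ 2)) :=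
      mul_nonneg (by linarith) (by linarith)
    have e3 : (L * frob D) * (-δ * M ^ 2 - frob D ^ 2)
        = (L * frob D) * (-δ * M ^ 2) - L * frob D ^ 3 := by ring
    have e4 : (-δ) * (3 * (1 - 2 * σ) - frob D * (L * M ^ 2))
        = (-δ) * (3 * (1 - 2 * σ)) - (L * frob D) * (-δ * M ^ 2) := by ring
    linarith [h1, h2, e3, e4, hq0δ]
  rw [hlog1, htrS]
  have goal' : -(∑ i, Real.log (1 + μ i)) ≤ -(∑ i, μ i) + (σ - 1) * δ := by
    calc -(∑ i, Real.log (1 + μ i))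
        ≤ -(∑ i, μ i) + (∑ i, μ i ^ 2) / 2 + (L * frob D ^ 3) / 6 := taylor
      _ ≤ -(∑ i, μ i) + (σ - 1) * δ := by linarith [key]
  have hδexp : δ = (Matrix.trace (S * D) - ∑ i, μ i) + norm1 Λ (X + D) - norm1 Λ X := by
    rw [hδdef, htrδ]
  linarith [goal', hδexp]
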